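/- For every area sequence w, bounce(w) = area(ψ(w)). -/

import Mathlib

/-- The `i`-th letter of the word `w` (`1`-indexed, as in the paper);
defaults to `0` out of range. -/
def get1 (w : List ℕ) (i : ℕ) : ℕ := w.getD (i - 1) 0

/-- `w` is the area sequence of a Dyck path: the first letter is `0` and each
letter exceeds the previous one by at most one. -/
def IsAreaSeq (w : List ℕ) : Prop :=
  (w ≠ [] → get1 w 1 = 0) ∧ ∀ i, 1 ≤ i → i < w.length → get1 w (i + 1) ≤ get1 w i + 1

/-- Insertion at position `i` (for `0 ≤ i ≤ n`): `ins w 0` prepends a `0`, and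
for `1 ≤ i ≤ n`, `ins w i` inserts the letter `w_i + 1` just after position `i`. -/
def ins (w : List ℕ) (i : ℕ) : List ℕ :=
  w.take i ++ (if i = 0 then 0 else get1 w i + 1) :: w.drop i

/-- The area statistic: the sum of the letters. -/
def area (w : List ℕ) : ℕ := w.sum

/-- The dinv statistic: `dinv w = Σ_i d_i` where `d_i` is the number of `j > i`
with `w_j = w_i` or `w_j = w_i - 1`. -/
def dinv (w : List ℕ) : ℕ :=
  ∑ i ∈ Finset.Icc 1 w.length,
    ((Finset.Ioc i w.length).filter
      (fun j => get1 w j = get1 w i ∨ get1 w j + 1 = get1 w i)).card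

/-- The maximal value of a word (`0` for the empty word). -/
def maxVal (w : List ℕ) : ℕ := w.foldr max 0

/-- Positions of the letters of maximal value `m`. -/
def Maxb (w : List ℕ) : Finset ℕ :=
  (Finset.Icc 1 w.length).filter (fun i => get1 w i = maxVal w)

/-- Positions `i` with `w_i = m - 1` such that all letters after position `i`
are `< m`. -/
def Maxa (w : List ℕ) : Finset ℕ :=
  (Finset.Icc 1 w.length).filter (fun i =>
    get1 w i + 1 = maxVal w ∧ ∀ j ∈ Finset.Ioc i w.length, get1 w j < maxVal w)

/-- The position of the leftmost letter equal to the maximal value `m` in the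
rightmost block of consecutive letters equal to `m`. -/
def i0 (w : List ℕ) : ℕ :=
  ((Finset.Icc 1 w.length).filter (fun i =>
    get1 w i = maxVal w ∧ (i = 1 ∨ get1 w (i - 1) ≠ maxVal w))).sup id

/-- The admissible insertion positions of `w`, listed in admissible order:
the elements of `Maxb w` in decreasing order, then the elements of `Maxa w`
in decreasing order, then `i0 w - 1`.  The empty word has the single
admissible insertion position `0`. -/
def admissible (w : List ℕ) : List ℕ :=
  if w = [] then [0]
  else ((Maxb w).sort (· ≤ ·)).reverse ++ ((Maxa w).sort (· ≤ ·)).reverse ++ [i0 w - 1]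

/-- Auxiliary version of the map `ψ`, reading the reversed word. -/
def psiRev : List ℕ → List ℕ
  | [] => []
  | a :: u => ins (psiRev u) ((admissible (psiRev u)).getD a 0)

/-- The map `ψ`: `ψ(ε) = ε` and `ψ(u a) = ins_{c_a}(ψ(u))` where
`c_0, c_1, …, c_k` are the admissible insertion positions of `ψ(u)` in
admissible order. -/
def psi (w : List ℕ) : List ℕ := psiRev w.reverse

/-- The bounce sequence: `b_1 = 0`, and `b_i = b_{i-1} + 1` if
`b_{i-1} + 1 ≤ w_i`, otherwise `b_i = 0`. -/
def bseq (w : List ℕ) : ℕ → ℕ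
  | 0 => 0
  | 1 => 0
  | (i + 2) => if bseq w (i + 1) + 1 ≤ get1 w (i + 2) then bseq w (i + 1) + 1 else 0

/-- The bounces of `w`: positions `1 < i ≤ n` with `b_i = 0`. -/
def bounces (w : List ℕ) : Finset ℕ :=
  (Finset.Icc 2 w.length).filter (fun i => bseq w i = 0)

/-- The bounce statistic: the sum of the reversed positions `n - i + 1` of the
bounces of `w`. -/
def bounce (w : List ℕ) : ℕ := ∑ i ∈ bounces w, (w.length - i + 1)

-- basic get1 lemmas
lemma length_ins (v : List ℕ) (c : ℕ) (h : c ≤ v.length) : (ins v c).length = v.length + 1 := by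
  simp [ins, List.length_take, List.length_drop]; omega

lemma get1_eq_getElem (v : List ℕ) (i : ℕ) (h1 : 1 ≤ i) (h2 : i ≤ v.length) :
    get1 v i = v[i-1]'(by omega) := by
  simp [get1, List.getD_eq_getElem?_getD, List.getElem?_eq_getElem (by omega : i - 1 < v.length)]

lemma get1_ins_le (v : List ℕ) (c j : ℕ) (hc : c ≤ v.length) (h1 : 1 ≤ j) (h2 : j ≤ c) :
    get1 (ins v c) j = get1 v j := by
  rw [get1_eq_getElem _ _ h1 (by rw [length_ins v c hc]; omega),
      get1_eq_getElem _ _ h1 (by omega)]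
  simp only [ins]
  rw [List.getElem_append_left (by simp [List.length_take]; omega)]
  simp [List.getElem_take]

lemma get1_ins_self (v : List ℕ) (c : ℕ) (hc : c ≤ v.length) :
    get1 (ins v c) (c+1) = if c = 0 then 0 else get1 v c + 1 := by
  rw [get1_eq_getElem _ _ (by omega) (by rw [length_ins v c hc]; omega)]
  simp only [ins]
  rw [List.getElem_append_right (by rw [List.length_take]; omega)]
  simp [List.length_take, Nat.min_eq_left hc]

lemma get1_ins_gt (v : List ℕ) (c j : ℕ) (hc : c ≤ v.length) (h1 : c + 2 ≤ j)
    (h2 : j ≤ v.length + 1) :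
    get1 (ins v c) j = get1 v (j-1) := by
  rw [get1_eq_getElem _ _ (by omega) (by rw [length_ins v c hc]; omega),
      get1_eq_getElem _ _ (by omega) (by omega)]
  simp only [ins]
  rw [List.getElem_append_right (by rw [List.length_take]; omega)]
  have hl : (v.take c).length = c := by rw [List.length_take]; omega
  have hidx : j - 1 - (v.take c).length = (j - 2 - c) + 1 := by rw [hl]; omega
  simp only [hidx, List.getElem_cons_succ, List.getElem_drop]
  congr 1
  omega

lemma ins_perm (v : List ℕ) (c : ℕ) :
    List.Perm (ins v c) ((if c = 0 then 0 else get1 v c + 1) :: v) := by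
  unfold ins
  have h1 : List.Perm (v.take c ++ (if c = 0 then 0 else get1 v c + 1) :: v.drop c)
      ((if c = 0 then 0 else get1 v c + 1) :: (v.take c ++ v.drop c)) :=
    List.perm_middle
  rw [List.take_append_drop] at h1
  exact h1

lemma area_ins (v : List ℕ) (c : ℕ) :
    area (ins v c) = area v + (if c = 0 then 0 else get1 v c + 1) := by
  have := (ins_perm v c).sum_eq
  simp [area] at this ⊢
  omega

lemma maxVal_eq_foldr (v : List ℕ) : maxVal v = v.foldr max 0 := rfl

lemma maxVal_perm {v w : List ℕ} (h : List.Perm v w) : maxVal v = maxVal w := by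
  induction h with
  | nil => rfl
  | cons x _ ih => simp [maxVal, List.foldr] at *; omega
  | swap x y l => simp [maxVal, List.foldr]; omega
  | trans _ _ ih1 ih2 => omega

lemma maxVal_cons (x : ℕ) (v : List ℕ) : maxVal (x :: v) = max x (maxVal v) := rfl

lemma le_maxVal {v : List ℕ} {x : ℕ} (h : x ∈ v) : x ≤ maxVal v := by
  induction v with
  | nil => simp at h
  | cons y l ih =>
    rcases List.mem_cons.mp h with h | h
    · subst h; simp [maxVal_cons]
    · have := ih h; simp [maxVal_cons]; omega

lemma maxVal_mem {v : List ℕ} (h : v ≠ []) : maxVal v ∈ v := by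
  induction v with
  | nil => simp at h
  | cons y l ih =>
    rcases eq_or_ne l [] with rfl | hl
    · simp [maxVal_cons, maxVal]
    · rw [maxVal_cons]
      rcases Nat.le_total (maxVal l) y with h' | h'
      · simp [Nat.max_eq_left h']
      · rw [Nat.max_eq_right h']
        exact List.mem_cons_of_mem _ (ih hl)

lemma get1_mem {v : List ℕ} {i : ℕ} (h1 : 1 ≤ i) (h2 : i ≤ v.length) : get1 v i ∈ v := by
  rw [get1_eq_getElem v i h1 h2]; exact List.getElem_mem _

lemma get1_le_maxVal {v : List ℕ} {i : ℕ} (h1 : 1 ≤ i) (h2 : i ≤ v.length) :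
    get1 v i ≤ maxVal v := le_maxVal (get1_mem h1 h2)

lemma maxVal_ins (v : List ℕ) (c : ℕ) :
    maxVal (ins v c) = max (if c = 0 then 0 else get1 v c + 1) (maxVal v) := by
  rw [maxVal_perm (ins_perm v c), maxVal_cons]

lemma countP_gt_of_sorted (L : List ℕ) (hL : L.Pairwise (· < ·)) (c k : ℕ) (hk : k < L.length)
    (hck : L[k] = c) :
    L.countP (fun x => decide (c < x)) = L.length - 1 - k := by
  induction L generalizing k with
  | nil => simp at hk
  | cons x l ih =>
    have hs : l.Pairwise (· < ·) := hL.of_cons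
    match k with
    | 0 =>
      simp only [List.getElem_cons_zero] at hck
      subst hck
      simp only [List.countP_cons]
      rw [List.countP_eq_length.mpr (fun y hy => by
        simp only [decide_eq_true_eq]; exact List.rel_of_pairwise_cons hL hy)]
      simp
    | k + 1 =>
      have hk' : k < l.length := by simpa using hk
      simp only [List.getElem_cons_succ] at hck
      simp only [List.countP_cons]
      have hx : ¬ (c < x) := by
        have := List.rel_of_pairwise_cons hL (List.getElem_mem (n := k) hk')
        omega
      rw [ih hs k hk' hck]
      simp [hx]
      omega

lemma sort_rev_getD (s : Finset ℕ) (a : ℕ) (ha : a < s.card) :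
    ((s.sort (· ≤ ·)).reverse.getD a 0) ∈ s ∧
    (s.filter (fun x => ((s.sort (· ≤ ·)).reverse.getD a 0) < x)).card = a := by
  set L := s.sort (· ≤ ·) with hLdef
  set c := L.reverse.getD a 0 with hcdef
  have hlen : L.length = s.card := Finset.length_sort _
  have hlt : L.Pairwise (· < ·) := (Finset.sortedLT_sort s).pairwise
  have harev : a < L.reverse.length := by rw [List.length_reverse]; omega
  have hc : L[L.length - 1 - a]'(by omega) = c := by
    rw [hcdef, List.getD_eq_getElem _ _ harev, List.getElem_reverse]
  constructor
  · rw [← Finset.mem_sort (· ≤ ·) , ← hc]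
    show L[L.length - 1 - a]'(by omega) ∈ L
    exact List.getElem_mem _
  · have hcount := countP_gt_of_sorted L hlt c (L.length - 1 - a) (by omega) hc
    have hfilt : (s.filter (fun x => c < x)).card = L.countP (fun x => decide (c < x)) := by
      have h1 : (s.filter (fun x => c < x)).card
          = Multiset.countP (fun x => c < x) s.val := by
        rw [Multiset.countP_eq_card_filter]; rfl
      have h2 : s.val = (L : Multiset ℕ) := (Finset.sort_eq s _).symm
      rw [h1, h2, Multiset.coe_countP]
    rw [hfilt, hcount]
    omega

lemma get1_append_left (u w : List ℕ) (i : ℕ) (h1 : 1 ≤ i) (h2 : i ≤ u.length) :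
    get1 (u ++ w) i = get1 u i := by
  rw [get1_eq_getElem _ _ h1 (by simp; omega), get1_eq_getElem _ _ h1 h2]
  rw [List.getElem_append_left (by omega)]

lemma get1_snoc_last (u : List ℕ) (x : ℕ) :
    get1 (u ++ [x]) (u.length + 1) = x := by
  rw [get1_eq_getElem _ _ (by omega) (by simp)]
  simp

lemma bseq_snoc (u : List ℕ) (x : ℕ) (i : ℕ) (h : i ≤ u.length) :
    bseq (u ++ [x]) i = bseq u i := by
  induction i with
  | zero => rfl
  | succ i ih =>
    match i with
    | 0 => rfl
    | i + 1 =>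
      rw [bseq, bseq, ih (by omega), get1_append_left u [x] (i+2) (by omega) (by omega)]

lemma bseq_le (u : List ℕ) (i : ℕ) : bseq u i ≤ get1 u i + 1 := by
  match i with
  | 0 => simp [bseq]
  | 1 => simp [bseq]
  | i + 2 =>
    rw [bseq]
    split <;> omega

lemma bseq_le' (u : List ℕ) (i : ℕ) (h : 1 ≤ i) : bseq u i ≤ get1 u i := by
  match i with
  | 1 => simp [bseq]
  | i + 2 =>
    rw [bseq]
    split <;> omega

lemma bseq_snoc_last (u : List ℕ) (x : ℕ) (hu : u ≠ []) :
    bseq (u ++ [x]) (u.length + 1)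
      = if bseq u u.length + 1 ≤ x then bseq u u.length + 1 else 0 := by
  have hn : 1 ≤ u.length := List.length_pos_iff.mpr hu
  obtain ⟨k, hk⟩ : ∃ k, u.length = k + 1 := ⟨u.length - 1, by omega⟩
  have hg : get1 (u ++ [x]) (k + 2) = x := by
    rw [show k + 2 = u.length + 1 by omega, get1_snoc_last]
  rw [hk]
  show bseq (u ++ [x]) (k + 2) = _
  rw [bseq, bseq_snoc u x (k+1) (by omega), hg, ← hk]

lemma bounces_subset (u : List ℕ) : bounces u ⊆ Finset.Icc 2 u.length :=
  Finset.filter_subset _ _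

lemma bounces_snoc (u : List ℕ) (x : ℕ) (hu : u ≠ []) :
    bounces (u ++ [x])
      = if bseq u u.length + 1 ≤ x then bounces u
        else insert (u.length + 1) (bounces u) := by
  have hn : 1 ≤ u.length := List.length_pos_iff.mpr hu
  have hlen : (u ++ [x]).length = u.length + 1 := by simp
  have hmem : ∀ i, i ∈ bounces (u ++ [x]) ↔
      (i ∈ Finset.Icc 2 (u.length + 1) ∧ bseq (u ++ [x]) i = 0) := by
    intro i; simp [bounces, hlen]
  ext i
  rw [hmem]
  by_cases hle : bseq u u.length + 1 ≤ x
  · rw [if_pos hle]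
    constructor
    · rintro ⟨hi, hz⟩
      rcases eq_or_ne i (u.length + 1) with rfl | hne
      · rw [bseq_snoc_last u x hu, if_pos hle] at hz; omega
      · have hi' : i ≤ u.length := by
          simp [Finset.mem_Icc] at hi; omega
        rw [bseq_snoc u x i hi'] at hz
        simp only [bounces, Finset.mem_Icc, Finset.mem_filter] at hi ⊢
        exact ⟨⟨by omega, by omega⟩, hz⟩
    · intro hi
      have hi2 := bounces_subset u hi
      simp only [Finset.mem_Icc] at hi2
      simp only [bounces, Finset.mem_Icc, Finset.mem_filter] at hi
      refine ⟨by simp only [Finset.mem_Icc]; omega, ?_⟩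
      rw [bseq_snoc u x i (by omega)]
      exact hi.2
  · rw [if_neg hle]
    constructor
    · rintro ⟨hi, hz⟩
      rcases eq_or_ne i (u.length + 1) with rfl | hne
      · exact Finset.mem_insert_self _ _
      · have hi' : i ≤ u.length := by simp [Finset.mem_Icc] at hi; omega
        rw [bseq_snoc u x i hi'] at hz
        apply Finset.mem_insert_of_mem
        simp only [bounces, Finset.mem_Icc, Finset.mem_filter] at hi ⊢
        exact ⟨⟨by omega, by omega⟩, hz⟩
    · intro hi
      rcases Finset.mem_insert.mp hi with rfl | hi
      · refine ⟨by simp only [Finset.mem_Icc]; omega, ?_⟩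
        rw [bseq_snoc_last u x hu, if_neg hle]
      · have hi2 := bounces_subset u hi
        simp only [Finset.mem_Icc] at hi2
        simp only [bounces, Finset.mem_Icc, Finset.mem_filter] at hi
        refine ⟨by simp only [Finset.mem_Icc]; omega, ?_⟩
        rw [bseq_snoc u x i (by omega)]
        exact hi.2

lemma bounce_snoc (u : List ℕ) (x : ℕ) (hu : u ≠ []) :
    bounce (u ++ [x]) = bounce u + (bounces u).card
      + (if bseq u u.length + 1 ≤ x then 0 else 1) := by
  have hlen : (u ++ [x]).length = u.length + 1 := by simp
  have hsum : ∀ s : Finset ℕ, s ⊆ Finset.Icc 2 u.length →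
      ∑ i ∈ s, (u.length + 1 - i + 1) = (∑ i ∈ s, (u.length - i + 1)) + s.card := by
    intro s hs
    rw [Finset.card_eq_sum_ones, ← Finset.sum_add_distrib]
    apply Finset.sum_congr rfl
    intro i hi
    have := hs hi
    simp [Finset.mem_Icc] at this
    omega
  rw [bounce, bounces_snoc u x hu, hlen]
  by_cases hle : bseq u u.length + 1 ≤ x
  · rw [if_pos hle, if_pos hle, hsum _ (bounces_subset u)]
    rfl
  · rw [if_neg hle, if_neg hle]
    have hnotmem : u.length + 1 ∉ bounces u := by
      intro h
      have := bounces_subset u h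
      simp [Finset.mem_Icc] at this
    rw [Finset.sum_insert hnotmem, hsum _ (bounces_subset u)]
    simp only [bounce]
    omega

lemma isAreaSeq_snoc (u : List ℕ) (x : ℕ) (h : IsAreaSeq (u ++ [x])) :
    IsAreaSeq u ∧ (u ≠ [] → x ≤ get1 u u.length + 1) ∧ (u = [] → x = 0) := by
  obtain ⟨h1, h2⟩ := h
  refine ⟨⟨?_, ?_⟩, ?_, ?_⟩
  · intro hu
    have := h1 (by simp)
    rwa [get1_append_left u [x] 1 le_rfl (List.length_pos_iff.mpr hu)] at this
  · intro i hi1 hi2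
    have := h2 i hi1 (by simp; omega)
    rwa [get1_append_left u [x] (i+1) (by omega) (by omega),
      get1_append_left u [x] i hi1 (by omega)] at this
  · intro hu
    have hn : 1 ≤ u.length := List.length_pos_iff.mpr hu
    have := h2 u.length (by omega) (by simp)
    rwa [get1_snoc_last, get1_append_left u [x] u.length hn le_rfl] at this
  · intro hu
    subst hu
    have := h1 (by simp)
    simpa [get1] using this

lemma isAreaSeq_ins (v : List ℕ) (c : ℕ) (h : IsAreaSeq v) (hc : c ≤ v.length) :
    IsAreaSeq (ins v c) := by
  obtain ⟨h1, h2⟩ := h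
  have hlen := length_ins v c hc
  constructor
  · intro _
    rcases Nat.eq_zero_or_pos c with rfl | hcpos
    · rw [get1_ins_self v 0 hc]; simp
    · rw [get1_ins_le v c 1 hc le_rfl hcpos]
      exact h1 (by intro h; subst h; simp at hcpos hc; omega)
  · intro i hi1 hi2
    rw [hlen] at hi2
    -- cases on position
    rcases Nat.lt_or_ge (i + 1) (c + 1) with hlt | hge
    · -- i+1 ≤ c
      rw [get1_ins_le v c (i+1) hc (by omega) (by omega),
          get1_ins_le v c i hc hi1 (by omega)]
      exact h2 i hi1 (by omega)
    rcases Nat.eq_or_lt_of_le hge with heq | hgt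
    · -- i + 1 = c + 1, i.e. i = c ≥ 1
      have hic : i = c := by omega
      subst hic
      rw [get1_ins_self v i hc, if_neg (by omega)]
      rw [get1_ins_le v i i hc hi1 le_rfl]
    rcases Nat.eq_or_lt_of_le hgt with heq | hgt2
    · -- i + 1 = c + 2, i.e. i = c + 1
      have hic : i = c + 1 := by omega
      subst hic
      rw [get1_ins_gt v c (c+2) hc le_rfl (by omega), get1_ins_self v c hc]
      have hred : c + 2 - 1 = c + 1 := rfl
      rw [hred]
      rcases Nat.eq_zero_or_pos c with rfl | hcpos
      · rw [if_pos rfl]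
        have hv : v ≠ [] := by intro h; subst h; simp at hi2
        have := h1 hv
        simp only [Nat.zero_add]
        omega
      · rw [if_neg (by omega)]
        have := h2 c hcpos (by omega)
        omega
    · -- i + 1 ≥ c + 3
      rw [get1_ins_gt v c (i+1) hc (by omega) (by omega),
          get1_ins_gt v c i hc (by omega) (by omega)]
      have he1 : i + 1 - 1 = (i - 1) + 1 := by omega
      rw [he1]
      have := h2 (i-1) (by omega) (by omega)
      have he2 : i - 1 + 1 = i := by omega
      rw [he2] at this
      have he3 : get1 v (i - 1 + 1) = get1 v i := by rw [he2]
      omega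

lemma card_filter_pos (v : List ℕ) (P : ℕ → Prop) [DecidablePred P] :
    ((Finset.Icc 1 v.length).filter (fun j => P (get1 v j))).card
      = v.countP (fun x => decide (P x)) := by
  induction v using List.reverseRecOn with
  | nil => simp
  | append_singleton u x ih =>
    have hlen : (u ++ [x]).length = u.length + 1 := by simp
    rw [hlen, List.countP_append]
    have hIcc : Finset.Icc 1 (u.length + 1) = insert (u.length + 1) (Finset.Icc 1 u.length) := by
      ext j; simp [Finset.mem_Icc]; omega
    rw [hIcc, Finset.filter_insert]
    have hsame : (Finset.Icc 1 u.length).filter (fun j => P (get1 (u ++ [x]) j))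
        = (Finset.Icc 1 u.length).filter (fun j => P (get1 u j)) := by
      apply Finset.filter_congr
      intro j hj
      simp only [Finset.mem_Icc] at hj
      rw [get1_append_left u [x] j hj.1 hj.2]
    by_cases hP : P (get1 (u ++ [x]) (u.length + 1))
    · rw [if_pos hP, Finset.card_insert_of_notMem (by simp [Finset.mem_Icc]), hsame, ih]
      rw [get1_snoc_last] at hP
      simp [hP]
    · rw [if_neg hP, hsame, ih]
      rw [get1_snoc_last] at hP
      simp [hP]

lemma countP_ins (v : List ℕ) (c : ℕ) (P : ℕ → Bool) :
    (ins v c).countP P = v.countP P + (if P (if c = 0 then 0 else get1 v c + 1) then 1 else 0) := by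
  rw [(ins_perm v c).countP_eq, List.countP_cons]

lemma mem_Maxb (v : List ℕ) (i : ℕ) :
    i ∈ Maxb v ↔ 1 ≤ i ∧ i ≤ v.length ∧ get1 v i = maxVal v := by
  simp [Maxb, Finset.mem_filter, Finset.mem_Icc, and_assoc]

lemma mem_Maxa (v : List ℕ) (i : ℕ) :
    i ∈ Maxa v ↔ 1 ≤ i ∧ i ≤ v.length ∧ get1 v i + 1 = maxVal v ∧
      ∀ j, i < j → j ≤ v.length → get1 v j < maxVal v := by
  simp [Maxa, Finset.mem_filter, Finset.mem_Icc, Finset.mem_Ioc, and_assoc]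

lemma Maxb_nonempty {v : List ℕ} (hv : v ≠ []) : (Maxb v).Nonempty := by
  have hm : maxVal v ∈ v := maxVal_mem hv
  obtain ⟨k, hk, hval⟩ := List.mem_iff_getElem.mp hm
  refine ⟨k + 1, (mem_Maxb v (k+1)).mpr ⟨by omega, by omega, ?_⟩⟩
  rw [get1_eq_getElem v (k+1) (by omega) (by omega)]
  simpa using hval

lemma Maxb_card_eq_countP (v : List ℕ) :
    (Maxb v).card = v.countP (fun x => decide (x = maxVal v)) := by
  rw [Maxb, card_filter_pos v (fun x => x = maxVal v)]

lemma Maxa_empty_of_max0 {v : List ℕ} (h : maxVal v = 0) : Maxa v = ∅ := by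
  apply Finset.filter_eq_empty_iff.mpr
  intro i _
  rw [h]
  simp

/-- The key structural lemma for `i0`. -/
lemma i0_spec {v : List ℕ} (hv : v ≠ []) :
    1 ≤ i0 v ∧ i0 v ≤ v.length ∧ get1 v (i0 v) = maxVal v ∧
      (i0 v = 1 ∨ get1 v (i0 v - 1) ≠ maxVal v) := by
  classical
  set S := (Finset.Icc 1 v.length).filter (fun i =>
    get1 v i = maxVal v ∧ (i = 1 ∨ get1 v (i - 1) ≠ maxVal v)) with hS
  have hSne : S.Nonempty := by
    -- take the minimal element of Maxb v
    obtain ⟨f, hf⟩ := Maxb_nonempty hv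
    -- consider the minimum of Maxb v
    have hMne : (Maxb v).Nonempty := ⟨f, hf⟩
    set g := (Maxb v).min' hMne with hg
    have hgmem := (Maxb v).min'_mem hMne
    rw [mem_Maxb] at hgmem
    refine ⟨g, ?_⟩
    rw [hS, Finset.mem_filter, Finset.mem_Icc]
    refine ⟨⟨hgmem.1, hgmem.2.1⟩, hgmem.2.2, ?_⟩
    rcases eq_or_ne g 1 with h1 | h1
    · exact Or.inl h1
    · right
      intro hcon
      have hg1 : g - 1 ∈ Maxb v := by
        rw [mem_Maxb]
        exact ⟨by omega, by omega, hcon⟩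
      have := (Maxb v).min'_le _ hg1
      rw [← hg] at this
      omega
  obtain ⟨i, hiS, hisup⟩ := Finset.exists_mem_eq_sup S hSne id
  have hi0 : i0 v = i := by rw [i0, ← hS, hisup]; rfl
  rw [hS, Finset.mem_filter, Finset.mem_Icc] at hiS
  rw [hi0]
  exact ⟨hiS.1.1, hiS.1.2, hiS.2.1, hiS.2.2⟩

lemma Maxa_ins (v : List ℕ) (c : ℕ) (hc1 : 1 ≤ c) (hc2 : c ≤ v.length)
    (hmax : maxVal (ins v c) = get1 v c + 1) :
    Maxa (ins v c)
      = (((Finset.Icc 1 v.length).filter (fun i => get1 v i + 1 = maxVal (ins v c)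
          ∧ ∀ j ∈ Finset.Ioc i v.length, get1 v j < maxVal (ins v c))).filter
            (fun i => c < i)).image (· + 1) := by
  classical
  have hx : get1 (ins v c) (c + 1) = maxVal (ins v c) := by
    rw [get1_ins_self v c hc2, if_neg (by omega), hmax]
  have hlen : (ins v c).length = v.length + 1 := length_ins v c hc2
  ext j
  rw [mem_Maxa, hlen]
  simp only [Finset.mem_image, Finset.mem_filter, Finset.mem_Icc, Finset.mem_Ioc]
  constructor
  · rintro ⟨hj1, hj2, hjval, hjsuf⟩
    have hjne : j ≠ c + 1 := by
      intro h; subst h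
      rw [hx] at hjval
      omega
    have hjgt : c + 1 < j := by
      by_contra hle
      have hjc : j ≤ c := by omega
      have := hjsuf (c+1) (by omega) (by omega)
      rw [hx] at this
      omega
    refine ⟨j - 1, ⟨⟨⟨by omega, by omega⟩, ?_, ?_⟩, by omega⟩, by omega⟩
    · rw [← hjval, get1_ins_gt v c j hc2 (by omega) (by omega)]
    · intro j' hj'
      have := hjsuf (j' + 1) (by omega) (by omega)
      rwa [get1_ins_gt v c (j'+1) hc2 (by omega) (by omega), Nat.add_sub_cancel] at this
  · rintro ⟨i, ⟨⟨⟨hi1, hi2⟩, hival, hisuf⟩, hci⟩, rfl⟩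
    refine ⟨by omega, by omega, ?_, ?_⟩
    · rw [get1_ins_gt v c (i+1) hc2 (by omega) (by omega), Nat.add_sub_cancel]
      exact hival
    · intro j' hj'1 hj'2
      rw [get1_ins_gt v c j' hc2 (by omega) (by omega)]
      exact hisuf (j' - 1) ⟨by omega, by omega⟩

lemma admissible_getD_b (v : List ℕ) (hv : v ≠ []) (a : ℕ) (ha : a < (Maxb v).card) :
    (admissible v).getD a 0 = ((Maxb v).sort (· ≤ ·)).reverse.getD a 0 := by
  rw [admissible, if_neg hv, List.append_assoc,
    List.getD_append _ _ _ _ (by rw [List.length_reverse, Finset.length_sort]; omega)]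

lemma admissible_getD_a (v : List ℕ) (hv : v ≠ []) (a : ℕ) (ha1 : (Maxb v).card ≤ a)
    (ha2 : a < (Maxb v).card + (Maxa v).card) :
    (admissible v).getD a 0 = ((Maxa v).sort (· ≤ ·)).reverse.getD (a - (Maxb v).card) 0 := by
  rw [admissible, if_neg hv, List.append_assoc,
    List.getD_append_right _ _ _ _ (by rw [List.length_reverse, Finset.length_sort]; omega),
    List.getD_append _ _ _ _
      (by rw [List.length_reverse, Finset.length_sort, List.length_reverse, Finset.length_sort]; omega)]
  rw [List.length_reverse, Finset.length_sort]

lemma admissible_getD_last (v : List ℕ) (hv : v ≠ []) (a : ℕ)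
    (ha : a = (Maxb v).card + (Maxa v).card) :
    (admissible v).getD a 0 = i0 v - 1 := by
  rw [admissible, if_neg hv, List.append_assoc,
    List.getD_append_right _ _ _ _ (by rw [List.length_reverse, Finset.length_sort]; omega),
    List.getD_append_right _ _ _ _
      (by rw [List.length_reverse, Finset.length_sort, List.length_reverse, Finset.length_sort]; omega)]
  rw [List.length_reverse, Finset.length_sort, List.length_reverse, Finset.length_sort]
  have : a - (Maxb v).card - (Maxa v).card = 0 := by omega
  rw [this]
  rfl

lemma innerA (v : List ℕ) (c : ℕ) (hm' : maxVal (ins v c) = maxVal v + 1) :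
    (Finset.Icc 1 v.length).filter (fun i => get1 v i + 1 = maxVal (ins v c)
        ∧ ∀ j ∈ Finset.Ioc i v.length, get1 v j < maxVal (ins v c)) = Maxb v := by
  ext i
  simp only [Finset.mem_filter, Finset.mem_Icc, Finset.mem_Ioc, mem_Maxb, hm']
  constructor
  · rintro ⟨⟨h1, h2⟩, h3, _⟩
    exact ⟨h1, h2, by omega⟩
  · rintro ⟨h1, h2, h3⟩
    refine ⟨⟨h1, h2⟩, by omega, ?_⟩
    intro j hj
    have := get1_le_maxVal (v := v) (i := j) (by omega) hj.2
    omega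

lemma innerBC (v : List ℕ) (c : ℕ) (hm' : maxVal (ins v c) = maxVal v) :
    (Finset.Icc 1 v.length).filter (fun i => get1 v i + 1 = maxVal (ins v c)
        ∧ ∀ j ∈ Finset.Ioc i v.length, get1 v j < maxVal (ins v c)) = Maxa v := by
  rw [Maxa]
  apply Finset.filter_congr
  intro i _
  rw [hm']

lemma card_image_add_one (s : Finset ℕ) : (s.image (· + 1)).card = s.card :=
  Finset.card_image_of_injective s (add_left_injective 1)

lemma Maxa_filter_i0 (v : List ℕ) (hv : v ≠ []) :
    (Maxa v).filter (fun i => i0 v - 1 < i) = Maxa v := by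
  obtain ⟨ht1, ht2, htval, _⟩ := i0_spec hv
  apply Finset.filter_true_of_mem
  intro i hi
  rw [mem_Maxa] at hi
  obtain ⟨hi1, hi2, hival, hisuf⟩ := hi
  -- show i0 v - 1 < i, i.e. i ≥ i0 v; in fact i > i0 v
  by_contra hcon
  have hile : i ≤ i0 v - 1 := by omega
  have : get1 v (i0 v) < maxVal v := hisuf (i0 v) (by omega) ht2
  omega

lemma psi_snoc (u : List ℕ) (a : ℕ) :
    psi (u ++ [a]) = ins (psi u) ((admissible (psi u)).getD a 0) := by
  simp [psi, psiRev]

lemma key_lemma (u : List ℕ) (hu : u ≠ []) (h : IsAreaSeq u) :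
    (psi u).length = u.length ∧ IsAreaSeq (psi u) ∧
    maxVal (psi u) = (bounces u).card ∧
    (Maxb (psi u)).card = bseq u u.length + 1 ∧
    (Maxa (psi u)).card + bseq u u.length = get1 u u.length ∧
    bounce u = area (psi u) := by
  induction u using List.reverseRecOn with
  | nil => exact absurd rfl hu
  | append_singleton u' a ih =>
    obtain ⟨hu', hlast, hempty⟩ := isAreaSeq_snoc u' a h
    rcases eq_or_ne u' [] with rfl | hne
    · -- base case : u = [0]
      have ha0 : a = 0 := hempty rfl
      subst ha0
      have hpsi : psi ([] ++ [0]) = [0] := by decide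
      rw [hpsi]
      refine ⟨by decide, ⟨fun _ => rfl, ?_⟩, by decide, by decide, by decide, by decide⟩
      intro i hi1 hi2
      simp only [List.length_cons, List.length_nil] at hi2
      omega
    · specialize ih hne hu'
      obtain ⟨ihlen, ihseq, ihmax, ihb, iha, ihbounce⟩ := ih
      set v := psi u' with hvdef
      have hn1 : 1 ≤ u'.length := List.length_pos_iff.mpr hne
      have hvne : v ≠ [] := by
        intro hcon
        rw [hcon] at ihlen
        simp at ihlen
        omega
      have hla : a ≤ get1 u' u'.length + 1 := hlast hne
      have hpsi : psi (u' ++ [a]) = ins v ((admissible v).getD a 0) := psi_snoc u' a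
      set c := (admissible v).getD a 0 with hcdef
      have hlen' : (u' ++ [a]).length = u'.length + 1 := by simp
      have hget : get1 (u' ++ [a]) (u'.length + 1) = a := get1_snoc_last u' a
      have hbseq' : bseq (u' ++ [a]) (u'.length + 1)
          = if bseq u' u'.length + 1 ≤ a then bseq u' u'.length + 1 else 0 :=
        bseq_snoc_last u' a hne
      have hbounces' := bounces_snoc u' a hne
      have hbounce' := bounce_snoc u' a hne
      have hnotmem : u'.length + 1 ∉ bounces u' := by
        intro hmem
        have := bounces_subset u' hmem
        simp only [Finset.mem_Icc] at this
        omega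
      rw [hpsi, hlen', hget, hbseq', hbounces', hbounce']
      rcases Nat.lt_or_ge a (bseq u' u'.length + 1) with hcase | hcase2
      · -- Case A : a ≤ B, insertion in Maxb
        have hnb : ¬ (bseq u' u'.length + 1 ≤ a) := by omega
        have haB : a < (Maxb v).card := by omega
        have hcb : c = ((Maxb v).sort (· ≤ ·)).reverse.getD a 0 := admissible_getD_b v hvne a haB
        obtain ⟨hcmem, hccount⟩ := sort_rev_getD (Maxb v) a haB
        rw [← hcb] at hcmem hccount
        rw [mem_Maxb] at hcmem
        obtain ⟨hc1, hc2, hcval⟩ := hcmem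
        have hx : (if c = 0 then 0 else get1 v c + 1) = maxVal v + 1 := by
          rw [if_neg (by omega), hcval]
        have hm' : maxVal (ins v c) = maxVal v + 1 := by
          rw [maxVal_ins, hx]
          omega
        have hmaxins : maxVal (ins v c) = get1 v c + 1 := by rw [hm', hcval]
        have hMaxaCard : (Maxa (ins v c)).card = a := by
          rw [Maxa_ins v c hc1 hc2 hmaxins, innerA v c hm', card_image_add_one, hccount]
        have hMaxbCard : (Maxb (ins v c)).card = 1 := by
          have h0 : v.countP (fun x => decide (x = maxVal (ins v c))) = 0 := by
            apply List.countP_eq_zero.mpr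
            intro y hy
            have := le_maxVal hy
            simp only [decide_eq_true_eq, hm']
            omega
          rw [Maxb_card_eq_countP, countP_ins, h0, hx, hm']
          simp
        rw [if_neg hnb, if_neg hnb, if_neg hnb]
        refine ⟨?_, isAreaSeq_ins v c ihseq hc2, ?_, ?_, ?_, ?_⟩
        · rw [length_ins v c hc2, ihlen]
        · rw [hm', Finset.card_insert_of_notMem hnotmem, ← ihmax]
        · rw [hMaxbCard]
        · rw [hMaxaCard]; omega
        · rw [area_ins, hx, ihbounce, ihmax]
          omega
      · -- Cases B and C : a ≥ B + 1
        have hyes : bseq u' u'.length + 1 ≤ a := hcase2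
        rw [if_pos hyes, if_pos hyes, if_pos hyes]
        rcases Nat.lt_or_ge a (get1 u' u'.length + 1) with hcaseB | hcaseC
        · -- Case B : B + 1 ≤ a ≤ ℓ, insertion in Maxa
          have ha1 : (Maxb v).card ≤ a := by omega
          have ha2 : a < (Maxb v).card + (Maxa v).card := by omega
          have hca : c = ((Maxa v).sort (· ≤ ·)).reverse.getD (a - (Maxb v).card) 0 :=
            admissible_getD_a v hvne a ha1 ha2
          obtain ⟨hcmem, hccount⟩ := sort_rev_getD (Maxa v) (a - (Maxb v).card) (by omega)
          rw [← hca] at hcmem hccount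
          rw [mem_Maxa] at hcmem
          obtain ⟨hc1, hc2, hcval, hcsuf⟩ := hcmem
          have hx : (if c = 0 then 0 else get1 v c + 1) = maxVal v := by
            rw [if_neg (by omega), hcval]
          have hm' : maxVal (ins v c) = maxVal v := by
            rw [maxVal_ins, hx]
            omega
          have hmaxins : maxVal (ins v c) = get1 v c + 1 := by rw [hm', ← hcval]
          have hMaxaCard : (Maxa (ins v c)).card = a - (Maxb v).card := by
            rw [Maxa_ins v c hc1 hc2 hmaxins, innerBC v c hm', card_image_add_one, hccount]
          have hMaxbCard : (Maxb (ins v c)).card = (Maxb v).card + 1 := by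
            have hcongr : v.countP (fun x => decide (x = maxVal (ins v c)))
                = v.countP (fun x => decide (x = maxVal v)) := by
              apply List.countP_congr
              intro y _
              simp [hm']
            rw [Maxb_card_eq_countP, countP_ins, hcongr, hx, hm', ← Maxb_card_eq_countP]
            simp
          refine ⟨?_, isAreaSeq_ins v c ihseq hc2, ?_, ?_, ?_, ?_⟩
          · rw [length_ins v c hc2, ihlen]
          · rw [hm', ihmax]
          · rw [hMaxbCard, ihb]
          · rw [hMaxaCard]; omega
          · rw [area_ins, hx, ihbounce, ihmax]
            omega
        · -- Case C : a = ℓ + 1, insertion at i0 - 1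
          have haeq : a = get1 u' u'.length + 1 := by omega
          have haidx : a = (Maxb v).card + (Maxa v).card := by omega
          have hclast : c = i0 v - 1 := admissible_getD_last v hvne a haidx
          obtain ⟨ht1, ht2, htval, htor⟩ := i0_spec hvne
          rcases eq_or_ne (i0 v) 1 with ht1eq | htne1
          · -- subcase i0 = 1 : m = 0 and c = 0
            have hc0 : c = 0 := by rw [hclast, ht1eq]
            have hm0 : maxVal v = 0 := by
              have hfirst := ihseq.1 hvne
              rw [ht1eq] at htval
              omega
            have hx : (if c = 0 then 0 else get1 v c + 1) = 0 := by rw [if_pos hc0]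
            have hm' : maxVal (ins v c) = 0 := by
              rw [maxVal_ins, hx, hm0]
              simp
            have hMaxaCard : (Maxa (ins v c)).card = 0 := by
              rw [Maxa_empty_of_max0 hm']
              rfl
            have hMaxaOld : (Maxa v).card = 0 := by
              rw [Maxa_empty_of_max0 hm0]
              rfl
            have hMaxbCard : (Maxb (ins v c)).card = (Maxb v).card + 1 := by
              have hcongr : v.countP (fun x => decide (x = maxVal (ins v c)))
                  = v.countP (fun x => decide (x = maxVal v)) := by
                apply List.countP_congr
                intro y _
                simp [hm', hm0]
              rw [Maxb_card_eq_countP, countP_ins, hcongr, hx, hm', ← Maxb_card_eq_countP]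
              simp
            refine ⟨?_, isAreaSeq_ins v c ihseq (by rw [hc0]; omega), ?_, ?_, ?_, ?_⟩
            · rw [length_ins v c (by rw [hc0]; omega), ihlen]
            · rw [hm', hm0.symm, ihmax]
            · rw [hMaxbCard, ihb]
            · rw [hMaxaCard]; omega
            · rw [area_ins, hx, ihbounce, ← ihmax, hm0]
          · -- subcase i0 ≥ 2
            have ht2' : 2 ≤ i0 v := by omega
            have htne : get1 v (i0 v - 1) ≠ maxVal v := by
              rcases htor with h1 | h2
              · exact absurd h1 htne1
              · exact h2
            have hc1 : 1 ≤ c := by rw [hclast]; omega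
            have hc2 : c ≤ v.length := by rw [hclast]; omega
            have hcval : get1 v c + 1 = maxVal v := by
              have hstep := ihseq.2 (i0 v - 1) (by omega) (by omega)
              have heq : i0 v - 1 + 1 = i0 v := by omega
              rw [heq, htval] at hstep
              have hle := get1_le_maxVal (v := v) (i := i0 v - 1) (by omega) (by omega)
              rw [hclast]
              rw [hclast] at *
              omega
            have hx : (if c = 0 then 0 else get1 v c + 1) = maxVal v := by
              rw [if_neg (by omega), hcval]
            have hm' : maxVal (ins v c) = maxVal v := by
              rw [maxVal_ins, hx]
              omega
            have hmaxins : maxVal (ins v c) = get1 v c + 1 := by rw [hm', ← hcval]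
            have hMaxaCard : (Maxa (ins v c)).card = (Maxa v).card := by
              rw [Maxa_ins v c hc1 hc2 hmaxins, innerBC v c hm', hclast,
                Maxa_filter_i0 v hvne, card_image_add_one]
            have hMaxbCard : (Maxb (ins v c)).card = (Maxb v).card + 1 := by
              have hcongr : v.countP (fun x => decide (x = maxVal (ins v c)))
                  = v.countP (fun x => decide (x = maxVal v)) := by
                apply List.countP_congr
                intro y _
                simp [hm']
              rw [Maxb_card_eq_countP, countP_ins, hcongr, hx, hm', ← Maxb_card_eq_countP]
              simp
            refine ⟨?_, isAreaSeq_ins v c ihseq hc2, ?_, ?_, ?_, ?_⟩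
            · rw [length_ins v c hc2, ihlen]
            · rw [hm', ihmax]
            · rw [hMaxbCard, ihb]
            · rw [hMaxaCard]; omega
            · rw [area_ins, hx, ihbounce, ihmax]
              omega

/-- For every area sequence `w`, `bounce w = area (ψ w)`. -/
theorem bounce_eq_area_psi (w : List ℕ) (hw : IsAreaSeq w) :
    bounce w = area (psi w) := by
  rcases eq_or_ne w [] with rfl | hne
  · decide
  · exact (key_lemma w hne hw).2.2.2.2.2
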